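/- For unit vectors x, v, w in ℝ³ with x not parallel to v or w, cos(angle(v, w)) = sin θ · sin θ' · cos α + cos θ · cos θ', where θ = angle(x, v), θ' = angle(x, w), and α = angle(x × v, x × w). -/

import Mathlib

open InnerProductGeometry Real

open Matrix

noncomputable def cross3 (a b : EuclideanSpace ℝ (Fin 3)) : EuclideanSpace ℝ (Fin 3) :=
  (WithLp.equiv 2 (Fin 3 → ℝ)).symm
    (crossProduct ((WithLp.equiv 2 (Fin 3 → ℝ)) a) ((WithLp.equiv 2 (Fin 3 → ℝ)) b))

lemma inner_dot (a b : EuclideanSpace ℝ (Fin 3)) :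
    (inner ℝ a b : ℝ) = (WithLp.equiv 2 (Fin 3 → ℝ)) a ⬝ᵥ (WithLp.equiv 2 (Fin 3 → ℝ)) b := by
  simp [dotProduct, PiLp.inner_apply, mul_comm]

lemma inner_cross (a b c d : EuclideanSpace ℝ (Fin 3)) :
    (inner ℝ (cross3 a b) (cross3 c d) : ℝ) =
      (inner ℝ a c : ℝ) * (inner ℝ b d : ℝ) - (inner ℝ a d : ℝ) * (inner ℝ b c : ℝ) := by
  simp only [inner_dot, cross3, Equiv.apply_symm_apply]
  exact cross_dot_cross _ _ _ _

lemma norm_cross (a b : EuclideanSpace ℝ (Fin 3)) (ha : ‖a‖ = 1) (hb : ‖b‖ = 1) :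
    ‖cross3 a b‖ = Real.sin (angle a b) := by
  have h1 : ‖cross3 a b‖ ^ 2 = Real.sin (angle a b) ^ 2 := by
    rw [Real.sin_sq, cos_angle, ha, hb]
    have hL := inner_cross a b a b
    rw [real_inner_comm b a] at hL
    have hsq : ‖cross3 a b‖ ^ 2 = (inner ℝ (cross3 a b) (cross3 a b) : ℝ) :=
      (real_inner_self_eq_norm_sq _).symm
    have haa : (inner ℝ a a : ℝ) = 1 := by
      rw [real_inner_self_eq_norm_sq, ha]; norm_num
    have hbb : (inner ℝ b b : ℝ) = 1 := by
      rw [real_inner_self_eq_norm_sq, hb]; norm_num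
    rw [hsq, hL, haa, hbb, real_inner_comm b a]
    ring
  have h2 : 0 ≤ Real.sin (angle a b) :=
    Real.sin_nonneg_of_nonneg_of_le_pi (angle_nonneg a b) (angle_le_pi a b)
  nlinarith [norm_nonneg (cross3 a b)]

theorem stmt_2 (x v w : EuclideanSpace ℝ (Fin 3))
    (hx : ‖x‖ = 1) (hv : ‖v‖ = 1) (hw : ‖w‖ = 1)
    (hxv : cross3 x v ≠ 0) (hxw : cross3 x w ≠ 0) :
    Real.cos (angle v w) =
      Real.sin (angle x v) * Real.sin (angle x w) *
          Real.cos (angle (cross3 x v) (cross3 x w)) +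
        Real.cos (angle x v) * Real.cos (angle x w) := by
  have h1 : ‖cross3 x v‖ ≠ 0 := norm_ne_zero_iff.2 hxv
  have h2 : ‖cross3 x w‖ ≠ 0 := norm_ne_zero_iff.2 hxw
  have key : Real.sin (angle x v) * Real.sin (angle x w) *
      Real.cos (angle (cross3 x v) (cross3 x w)) =
      (inner ℝ (cross3 x v) (cross3 x w) : ℝ) := by
    rw [← norm_cross x v hx hv, ← norm_cross x w hx hw, cos_angle]
    field_simp
  rw [key, inner_cross, cos_angle, cos_angle, cos_angle,
    real_inner_self_eq_norm_sq, hx, hv, hw, real_inner_comm v x]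
  ring
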